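/- For every integer n ≥ 3, the spectral radius of the super compacted matrix SC_n is the unique real root larger than 1 of the polynomial Q_n(x) = x^n − 2(n−1)·Σ_{j=1}^{n−1} x^j + 1; in particular ρ(SC_n) > 1 and Q_n(ρ(SC_n)) = 0. -/

import Mathlib

/-- The spectral radius of a square real matrix: the maximum (supremum) of the
moduli of its complex eigenvalues. -/
noncomputable def specRad {m : Type*} [Fintype m] [DecidableEq m]
    (M : Matrix m m ℝ) : ℝ :=
  sSup {x : ℝ | ∃ z ∈ spectrum ℂ (M.map (algebraMap ℝ ℂ)), ‖z‖ = x}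

/-- Entry `(i+1, j+1)` of the super compacted matrix `SC_n` of rank `n`
(zero-indexed `i, j ∈ {0, …, n-1}`). -/
def SCfun (n i j : ℕ) : ℝ :=
  if i + 3 ≤ n ∧ j = i + 1 then 1
  else if i = n - 1 then 1
  else if i = n - 3 ∧ j = n - 1 then 2
  else if i = n - 2 ∧ j + 2 ≤ n then 2 * (n : ℝ) - 3
  else if i = n - 2 ∧ j = n - 1 then 2 * (n : ℝ) - 4
  else 0

/-- The super compacted matrix `SC_n` of rank `n`, of size `n × n`. -/
def SCmat (n : ℕ) : Matrix (Fin n) (Fin n) ℝ :=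
  Matrix.of fun i j => SCfun n i.val j.val

open Polynomial in
/-- The polynomial `Q_n(x) = x^n − 2(n−1)·Σ_{j=1}^{n−1} x^j + 1`. -/
noncomputable def Qpoly (n : ℕ) : Polynomial ℝ :=
  X ^ n - C (2 * ((n : ℝ) - 1)) * (∑ j ∈ Finset.Icc 1 (n - 1), X ^ j) + 1

open Polynomial Finset

noncomputable def Tg (x : ℝ) (m : ℕ) : ℝ := ∑ k ∈ Finset.range m, x ^ k

lemma Tg_succ (x : ℝ) (m : ℕ) : Tg x (m+1) = Tg x m + x ^ m := Finset.sum_range_succ _ _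

lemma mul_Tg (x : ℝ) (m : ℕ) : x * Tg x m = Tg x (m+1) - 1 := by
  unfold Tg
  rw [Finset.mul_sum, Finset.sum_range_succ' (fun k => x ^ k) m]
  simp [pow_succ, mul_comm]

lemma Tg_sub_mul (x : ℝ) (m : ℕ) : Tg x m * (x - 1) = x ^ m - 1 := geom_sum_mul x m

noncomputable def wfun (n : ℕ) (r : ℝ) (i : ℕ) : ℝ :=
  if i = n - 1 then r^(n-1) - (2*(n:ℝ)-3) * Tg r (n-1) else Tg r (n-1) - Tg r (n-2-i)

section eig
variable {n : ℕ} {r : ℝ}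

lemma SCfun_nonneg (hn : 3 ≤ n) (i j : ℕ) : 0 ≤ SCfun n i j := by
  have : (3:ℝ) ≤ (n:ℝ) := by exact_mod_cast hn
  unfold SCfun
  split_ifs <;> linarith

lemma col_sum (hn : 3 ≤ n) (hr2 : 2*(n:ℝ) - 2 < r)
    (hQ : r ^ n + 1 = 2*((n:ℝ)-1) * (Tg r n - 1)) (j : ℕ) (hj : j < n) :
    ∑ i ∈ Finset.range n, wfun n r i * SCfun n i j = r * wfun n r j := by
  have hnR : (3:ℝ) ≤ (n:ℝ) := by exact_mod_cast hn
  have hTn : Tg r n = Tg r (n-1) + r^(n-1) := by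
    have h := Tg_succ r (n-1)
    have e : n - 1 + 1 = n := by omega
    rw [e] at h; exact h
  have hrS : r * Tg r (n-1) = Tg r n - 1 := by
    have h := mul_Tg r (n-1)
    have e : n - 1 + 1 = n := by omega
    rw [e] at h; exact h
  have hpow : r * r^(n-1) = r^n := by
    rw [← pow_succ']; congr 1; omega
  have hw2 : wfun n r (n-2) = Tg r (n-1) := by
    unfold wfun
    rw [if_neg (by omega)]
    have : n - 2 - (n-2) = 0 := by omega
    rw [this]; simp [Tg]
  have hw1 : wfun n r (n-1) = r^(n-1) - (2*(n:ℝ)-3) * Tg r (n-1) := by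
    unfold wfun; rw [if_pos rfl]
  rcases Nat.lt_trichotomy j 0 with h0 | h0 | h0
  · omega
  · -- case j = 0
    subst h0
    have hsub : ({n-2, n-1} : Finset ℕ) ⊆ Finset.range n := by
      intro x hx; simp only [Finset.mem_insert, Finset.mem_singleton] at hx
      simp only [Finset.mem_range]; omega
    rw [← Finset.sum_subset hsub]
    · rw [Finset.sum_insert (by simp only [Finset.mem_singleton]; omega),
        Finset.sum_singleton]
      have hsc2 : SCfun n (n-2) 0 = 2*(n:ℝ) - 3 := by
        unfold SCfun
        rw [if_neg (by omega), if_neg (by omega), if_neg (by omega), if_pos (by omega)]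
      have hsc1 : SCfun n (n-1) 0 = 1 := by
        unfold SCfun
        rw [if_neg (by omega), if_pos (by omega)]
      have hw0 : wfun n r 0 = Tg r (n-1) - Tg r (n-2) := by
        unfold wfun; rw [if_neg (by omega), Nat.sub_zero]
      have hr2' : r * Tg r (n-2) = Tg r (n-1) - 1 := by
        have h := mul_Tg r (n-2)
        have e : n - 2 + 1 = n - 1 := by omega
        rw [e] at h; exact h
      rw [hsc2, hsc1, hw2, hw1, hw0]
      linear_combination (-1 : ℝ) * hrS + hr2' - hTn
    · intro i hi hni
      simp only [Finset.mem_insert, Finset.mem_singleton] at hni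
      simp only [Finset.mem_range] at hi
      push_neg at hni
      have : SCfun n i 0 = 0 := by
        unfold SCfun
        rw [if_neg (by omega), if_neg (by omega), if_neg (by omega), if_neg (by omega),
          if_neg (by omega)]
      rw [this, mul_zero]
  · rcases Nat.lt_or_ge j (n-1) with hj1 | hj1
    · -- case 1 ≤ j ≤ n-2
      have hsub : ({j-1, n-2, n-1} : Finset ℕ) ⊆ Finset.range n := by
        intro x hx
        simp only [Finset.mem_insert, Finset.mem_singleton] at hx
        simp only [Finset.mem_range]; omega
      rw [← Finset.sum_subset hsub]
      · rw [Finset.sum_insert (by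
            simp only [Finset.mem_insert, Finset.mem_singleton]; omega),
          Finset.sum_insert (by simp only [Finset.mem_singleton]; omega),
          Finset.sum_singleton]
        have hscj : SCfun n (j-1) j = 1 := by
          unfold SCfun
          rw [if_pos (by omega)]
        have hsc2 : SCfun n (n-2) j = 2*(n:ℝ) - 3 := by
          unfold SCfun
          rw [if_neg (by omega), if_neg (by omega), if_neg (by omega), if_pos (by omega)]
        have hsc1 : SCfun n (n-1) j = 1 := by
          unfold SCfun
          rw [if_neg (by omega), if_pos (by omega)]
        have hwj1 : wfun n r (j-1) = Tg r (n-1) - Tg r (n-1-j) := by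
          unfold wfun; rw [if_neg (by omega)]
          have : n - 2 - (j-1) = n - 1 - j := by omega
          rw [this]
        have hwj : wfun n r j = Tg r (n-1) - Tg r (n-2-j) := by
          unfold wfun; rw [if_neg (by omega)]
        have hrv : r * Tg r (n-2-j) = Tg r (n-1-j) - 1 := by
          have h := mul_Tg r (n-2-j)
          have e : n - 2 - j + 1 = n - 1 - j := by omega
          rw [e] at h; exact h
        rw [hscj, hsc2, hsc1, hwj1, hwj, hw2, hw1]
        linear_combination (-1 : ℝ) * hrS + hrv - hTn
      · intro i hi hni
        simp only [Finset.mem_insert, Finset.mem_singleton] at hni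
        simp only [Finset.mem_range] at hi
        push_neg at hni
        have : SCfun n i j = 0 := by
          unfold SCfun
          rw [if_neg (by omega), if_neg (by omega), if_neg (by omega), if_neg (by omega),
            if_neg (by omega)]
        rw [this, mul_zero]
    · -- case j = n-1
      have hjeq : j = n - 1 := by omega
      subst hjeq
      have hsub : ({n-3, n-2, n-1} : Finset ℕ) ⊆ Finset.range n := by
        intro x hx
        simp only [Finset.mem_insert, Finset.mem_singleton] at hx
        simp only [Finset.mem_range]; omega
      rw [← Finset.sum_subset hsub]
      · rw [Finset.sum_insert (by
            simp only [Finset.mem_insert, Finset.mem_singleton]; omega),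
          Finset.sum_insert (by simp only [Finset.mem_singleton]; omega),
          Finset.sum_singleton]
        have hsc3 : SCfun n (n-3) (n-1) = 2 := by
          unfold SCfun
          rw [if_neg (by omega), if_neg (by omega), if_pos (by omega)]
        have hsc2 : SCfun n (n-2) (n-1) = 2*(n:ℝ) - 4 := by
          unfold SCfun
          rw [if_neg (by omega), if_neg (by omega), if_neg (by omega), if_neg (by omega),
            if_pos (by omega)]
        have hsc1 : SCfun n (n-1) (n-1) = 1 := by
          unfold SCfun
          rw [if_neg (by omega), if_pos (by omega)]
        have hw3 : wfun n r (n-3) = Tg r (n-1) - 1 := by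
          unfold wfun; rw [if_neg (by omega)]
          have : n - 2 - (n-3) = 1 := by omega
          rw [this]; simp [Tg]
        rw [hsc3, hsc2, hsc1, hw3, hw2, hw1]
        linear_combination (2*(n:ℝ)-3) * hrS - hpow - hQ - hTn
      · intro i hi hni
        simp only [Finset.mem_insert, Finset.mem_singleton] at hni
        simp only [Finset.mem_range] at hi
        push_neg at hni
        have : SCfun n i (n-1) = 0 := by
          unfold SCfun
          rw [if_neg (by omega), if_neg (by omega), if_neg (by omega), if_neg (by omega),
            if_neg (by omega)]
        rw [this, mul_zero]

lemma wfun_pos (hn : 3 ≤ n) (hr2 : 2*(n:ℝ) - 2 < r) (i : ℕ) (hi : i < n) :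
    0 < wfun n r i := by
  have hnR : (3:ℝ) ≤ (n:ℝ) := by exact_mod_cast hn
  have hr0 : (0:ℝ) < r := by linarith
  have hr1 : (1:ℝ) < r := by linarith
  rcases Nat.eq_or_lt_of_le (Nat.le_of_lt_succ (by omega : i < (n-1)+1)) with he | hlt
  · -- i = n-1
    unfold wfun
    rw [if_pos he]
    have hTg := Tg_sub_mul r (n-1)
    have hpow : r * r^(n-1) = r^n := by rw [← pow_succ']; congr 1; omega
    have hb : (0:ℝ) < r^(n-1) := pow_pos hr0 _
    have h1 : (2*(n:ℝ)-2) * r^(n-1) < r * r^(n-1) := by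
      exact mul_lt_mul_of_pos_right hr2 hb
    nlinarith [hTg, hpow, h1, hb]
  · -- i ≤ n-2
    unfold wfun
    rw [if_neg (by omega)]
    have hle : n - 2 - i ≤ n - 1 := by omega
    have : Tg r (n-1) - Tg r (n-2-i) = ∑ k ∈ Finset.Ico (n-2-i) (n-1), r ^ k := by
      rw [Finset.sum_Ico_eq_sub _ hle]; rfl
    rw [this]
    apply Finset.sum_pos
    · intro k _; exact pow_pos hr0 k
    · exact ⟨n-2-i, by simp only [Finset.mem_Ico]; omega⟩

end eig

section spec
variable {n : ℕ} {r : ℝ}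

lemma key_fin (hn : 3 ≤ n) (hr2 : 2*(n:ℝ) - 2 < r)
    (hQ : r ^ n + 1 = 2*((n:ℝ)-1) * (Tg r n - 1)) (j : Fin n) :
    ∑ i : Fin n, wfun n r i.val * SCfun n i.val j.val = r * wfun n r j.val := by
  have h := col_sum hn hr2 hQ j.val j.isLt
  rw [← Fin.sum_univ_eq_sum_range (fun i => wfun n r i * SCfun n i j.val) n] at h
  exact h

lemma det_real_zero (hn : 3 ≤ n) (hr2 : 2*(n:ℝ) - 2 < r)
    (hQ : r ^ n + 1 = 2*((n:ℝ)-1) * (Tg r n - 1)) :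
    (r • (1 : Matrix (Fin n) (Fin n) ℝ) - SCmat n).det = 0 := by
  apply Matrix.exists_vecMul_eq_zero_iff.mp
  refine ⟨fun i => wfun n r i.val, ?_, ?_⟩
  · intro h
    exact ne_of_gt (wfun_pos hn hr2 0 (by omega)) (congrFun h ⟨0, by omega⟩)
  · rw [Matrix.vecMul_sub]
    funext j
    simp only [Pi.sub_apply, Pi.zero_apply]
    have h1 : Matrix.vecMul (fun i => wfun n r i.val) (r • (1:Matrix (Fin n) (Fin n) ℝ)) j
        = r * wfun n r j.val := by
      simp [Matrix.vecMul, dotProduct, Matrix.smul_apply, Matrix.one_apply,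
        mul_ite, Finset.sum_ite_eq]
      ring
    have hvm : Matrix.vecMul (fun i => wfun n r i.val) (SCmat n) j
        = ∑ i : Fin n, wfun n r i.val * SCfun n i.val j.val := by
      simp [Matrix.vecMul, dotProduct, SCmat]
    rw [h1, hvm, key_fin hn hr2 hQ j]
    ring

lemma mem_spec (hn : 3 ≤ n) (hr2 : 2*(n:ℝ) - 2 < r)
    (hQ : r ^ n + 1 = 2*((n:ℝ)-1) * (Tg r n - 1)) :
    (r : ℂ) ∈ spectrum ℂ ((SCmat n).map (algebraMap ℝ ℂ)) := by
  rw [spectrum.mem_iff]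
  intro hu
  rw [Matrix.isUnit_iff_isUnit_det] at hu
  have hmap : (algebraMap ℂ (Matrix (Fin n) (Fin n) ℂ)) (r:ℂ) - (SCmat n).map (algebraMap ℝ ℂ)
      = (r • (1 : Matrix (Fin n) (Fin n) ℝ) - SCmat n).map (algebraMap ℝ ℂ) := by
    ext i j
    simp only [Matrix.sub_apply, Matrix.map_apply, Matrix.algebraMap_matrix_apply,
      Matrix.smul_apply, Matrix.one_apply, smul_eq_mul]
    split_ifs <;> simp [Algebra.algebraMap_self, RingHom.id_apply] <;> ring
  rw [hmap] at hu
  have : ((r • (1 : Matrix (Fin n) (Fin n) ℝ) - SCmat n).map (algebraMap ℝ ℂ)).det = 0 := by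
    rw [← RingHom.mapMatrix_apply, ← RingHom.map_det, det_real_zero hn hr2 hQ, map_zero]
  rw [this] at hu
  exact (by simp : ¬ IsUnit (0:ℂ)) hu

lemma spec_bound (hn : 3 ≤ n) (hr2 : 2*(n:ℝ) - 2 < r)
    (hQ : r ^ n + 1 = 2*((n:ℝ)-1) * (Tg r n - 1)) {z : ℂ}
    (hz : z ∈ spectrum ℂ ((SCmat n).map (algebraMap ℝ ℂ))) : ‖z‖ ≤ r := by
  rw [spectrum.mem_iff] at hz
  have hdet0 : ((algebraMap ℂ (Matrix (Fin n) (Fin n) ℂ)) z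
      - (SCmat n).map (algebraMap ℝ ℂ)).det = 0 := by
    by_contra h
    exact hz ((Matrix.isUnit_iff_isUnit_det _).mpr (isUnit_iff_ne_zero.mpr h))
  obtain ⟨v, hv0, hvz⟩ := Matrix.exists_mulVec_eq_zero_iff.mpr hdet0
  have hvec : ∀ i : Fin n, z * v i = ∑ j : Fin n, ((SCfun n i.val j.val : ℝ) : ℂ) * v j := by
    intro i
    have h := congrFun hvz i
    rw [Matrix.sub_mulVec] at h
    simp only [Pi.sub_apply, Pi.zero_apply, sub_eq_zero] at h
    have h1 : ((algebraMap ℂ (Matrix (Fin n) (Fin n) ℂ)) z).mulVec v i = z * v i := by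
      rw [Matrix.algebraMap_eq_diagonal]
      rw [Matrix.mulVec_diagonal]
      simp
    have h2 : (((SCmat n).map (algebraMap ℝ ℂ)).mulVec v) i
        = ∑ j : Fin n, ((SCfun n i.val j.val : ℝ) : ℂ) * v j := by
      simp [Matrix.mulVec, dotProduct, SCmat, Matrix.map_apply]
    rw [h1, h2] at h
    exact h
  set c : Fin n → ℝ := fun j => ‖v j‖ with hc
  have habs : ∀ i : Fin n, ‖z‖ * c i ≤ ∑ j : Fin n, SCfun n i.val j.val * c j := by
    intro i
    calc ‖z‖ * c i = ‖z * v i‖ := by rw [norm_mul]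
    _ = ‖∑ j : Fin n, ((SCfun n i.val j.val : ℝ) : ℂ) * v j‖ := by rw [hvec i]
    _ ≤ ∑ j : Fin n, ‖((SCfun n i.val j.val : ℝ) : ℂ) * v j‖ :=
        norm_sum_le _ _
    _ = ∑ j : Fin n, SCfun n i.val j.val * c j := by
        apply Finset.sum_congr rfl
        intro j _
        rw [norm_mul, Complex.norm_real, Real.norm_eq_abs, abs_of_nonneg (SCfun_nonneg hn _ _)]
  have hwpos : ∀ i : Fin n, 0 < wfun n r i.val := fun i => wfun_pos hn hr2 i.val i.isLt
  have main : ‖z‖ * (∑ i : Fin n, wfun n r i.val * c i)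
      ≤ r * (∑ i : Fin n, wfun n r i.val * c i) := by
    calc ‖z‖ * (∑ i : Fin n, wfun n r i.val * c i)
        = ∑ i : Fin n, wfun n r i.val * (‖z‖ * c i) := by
          rw [Finset.mul_sum]; apply Finset.sum_congr rfl; intro i _; ring
    _ ≤ ∑ i : Fin n, wfun n r i.val * (∑ j : Fin n, SCfun n i.val j.val * c j) := by
          apply Finset.sum_le_sum
          intro i _
          exact mul_le_mul_of_nonneg_left (habs i) (le_of_lt (hwpos i))
    _ = ∑ j : Fin n, (∑ i : Fin n, wfun n r i.val * SCfun n i.val j.val) * c j := by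
          simp_rw [Finset.mul_sum, Finset.sum_mul, mul_assoc]
          exact Finset.sum_comm
    _ = ∑ j : Fin n, (r * wfun n r j.val) * c j := by
          apply Finset.sum_congr rfl; intro j _
          rw [key_fin hn hr2 hQ j]
    _ = r * (∑ j : Fin n, wfun n r j.val * c j) := by
          rw [Finset.mul_sum]; apply Finset.sum_congr rfl; intro j _; ring
  have hpos : 0 < ∑ i : Fin n, wfun n r i.val * c i := by
    obtain ⟨i0, hi0⟩ := Function.ne_iff.mp hv0
    apply Finset.sum_pos'
    · intro i _
      exact mul_nonneg (le_of_lt (hwpos i)) (norm_nonneg _)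
    · refine ⟨i0, Finset.mem_univ _, ?_⟩
      apply mul_pos (hwpos i0)
      simpa [hc] using hi0
  exact le_of_mul_le_mul_right main hpos

end spec

lemma sum_Icc_pow (x : ℝ) (n : ℕ) (hn : 1 ≤ n) :
    ∑ j ∈ Finset.Icc 1 (n-1), x ^ j = Tg x n - 1 := by
  have h : Finset.Icc 1 (n-1) = Finset.Ico 1 n := by
    rw [← Finset.Ico_add_one_right_eq_Icc]; congr 1; omega
  rw [h, Finset.sum_Ico_eq_sub _ (by omega)]
  simp [Tg]

lemma eval_Qpoly (n : ℕ) (x : ℝ) (hn : 1 ≤ n) :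
    (Qpoly n).eval x = x ^ n - 2 * ((n:ℝ) - 1) * (Tg x n - 1) + 1 := by
  simp [Qpoly, Polynomial.eval_finset_sum, ← sum_Icc_pow x n hn]

lemma Q_at_top (n : ℕ) (hn : 3 ≤ n) : (Qpoly n).eval (2*(n:ℝ) - 1) = 2 * n := by
  have hn1 : (1:ℕ) ≤ n := by omega
  have hx : (2*(n:ℝ) - 1) - 1 = 2*((n:ℝ)-1) := by ring
  have hg := Tg_sub_mul (2*(n:ℝ) - 1) n
  rw [eval_Qpoly n _ hn1]
  nlinarith [hg]

lemma Q_at_bot (n : ℕ) (hn : 3 ≤ n) : (Qpoly n).eval (2*(n:ℝ) - 2) < 0 := by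
  have hn1 : (1:ℕ) ≤ n := by omega
  set x : ℝ := 2*(n:ℝ) - 2 with hxdef
  have hx4 : (4:ℝ) ≤ x := by
    have : (3:ℝ) ≤ (n:ℝ) := by exact_mod_cast hn
    simp only [hxdef]; linarith
  have hg := Tg_sub_mul x n
  have hx1 : (0:ℝ) < x - 1 := by linarith
  have hxn : x ^ 3 ≤ x ^ n := pow_le_pow_right₀ (by linarith) hn
  -- (x-1) * Q(x) = -x^n + x^2 + x - 1 < 0
  have key : (x - 1) * (Qpoly n).eval x = -x^n + x^2 + x - 1 := by
    rw [eval_Qpoly n _ hn1]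
    have h2 : 2*((n:ℝ)-1) = x := by simp only [hxdef]; ring
    linear_combination (-x) * hg - (x-1)*(Tg x n - 1) * h2
  nlinarith [key, hx4, hxn, sq_nonneg x]

lemma Q_root_exists (n : ℕ) (hn : 3 ≤ n) :
    ∃ r : ℝ, 2*(n:ℝ) - 2 < r ∧ r < 2*(n:ℝ) - 1 ∧ (Qpoly n).eval r = 0 := by
  have hle : (2*(n:ℝ) - 2) ≤ 2*(n:ℝ) - 1 := by linarith
  have hcont : ContinuousOn (fun x => (Qpoly n).eval x) (Set.Icc (2*(n:ℝ)-2) (2*(n:ℝ)-1)) :=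
    ((Qpoly n).continuous).continuousOn
  have h0 : (0:ℝ) ∈ Set.Ioo ((Qpoly n).eval (2*(n:ℝ)-2)) ((Qpoly n).eval (2*(n:ℝ)-1)) := by
    constructor
    · exact Q_at_bot n hn
    · rw [Q_at_top n hn]; positivity
  obtain ⟨r, hr, hr0⟩ := intermediate_value_Ioo hle hcont h0
  exact ⟨r, hr.1, hr.2, hr0⟩

lemma Q_root_unique (n : ℕ) (hn : 3 ≤ n) {x y : ℝ} (hx1 : 1 < x) (hy1 : 1 < y)
    (hx : (Qpoly n).eval x = 0) (hy : (Qpoly n).eval y = 0) : x = y := by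
  have hn1 : (1:ℕ) ≤ n := by omega
  have hnR : (3:ℝ) ≤ (n:ℝ) := by exact_mod_cast hn
  -- core: no two roots 1 < x < y
  have core : ∀ x y : ℝ, 1 < x → 1 < y → x < y →
      (Qpoly n).eval x = 0 → (Qpoly n).eval y = 0 → False := by
    intro x y hx1 hy1 hxy hx hy
    have hx0 : (0:ℝ) < x := by linarith
    have hy0 : (0:ℝ) < y := by linarith
    set Sx := ∑ j ∈ Finset.Icc 1 (n-1), x ^ j with hSx
    set Sy := ∑ j ∈ Finset.Icc 1 (n-1), y ^ j with hSy
    have hex : x ^ n + 1 = 2*((n:ℝ)-1) * Sx := by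
      have := hx; rw [eval_Qpoly n x hn1] at this
      rw [hSx, sum_Icc_pow x n hn1]; linarith
    have hey : y ^ n + 1 = 2*((n:ℝ)-1) * Sy := by
      have := hy; rw [eval_Qpoly n y hn1] at this
      rw [hSy, sum_Icc_pow y n hn1]; linarith
    -- step 1 : x^n > n - 1
    have hcard : (Finset.Icc 1 (n-1)).card = n - 1 := by
      rw [Nat.card_Icc]; omega
    have hSxlb : ((n:ℝ)-1) * x ≤ Sx := by
      have : ∀ j ∈ Finset.Icc 1 (n-1), x ≤ x ^ j := by
        intro j hj
        simp only [Finset.mem_Icc] at hj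
        calc x = x ^ 1 := (pow_one x).symm
        _ ≤ x ^ j := pow_le_pow_right₀ (le_of_lt hx1) hj.1
      have h := Finset.card_nsmul_le_sum (Finset.Icc 1 (n-1)) (fun j => x ^ j) x this
      rw [hcard] at h
      have hcast : ((n - 1 : ℕ) : ℝ) = (n:ℝ) - 1 := by
        have : (1:ℕ) ≤ n := hn1; push_cast [this]; ring
      simpa [nsmul_eq_mul, hcast] using h
    have hxn_big : (n:ℝ) - 1 < x ^ n := by
      have h2 : 2*((n:ℝ)-1)*(((n:ℝ)-1)*x) ≤ 2*((n:ℝ)-1)*Sx :=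
        mul_le_mul_of_nonneg_left hSxlb (by linarith)
      have hm : ((n:ℝ)-1)*((n:ℝ)-1)*1 ≤ ((n:ℝ)-1)*((n:ℝ)-1)*x :=
        mul_le_mul_of_nonneg_left (le_of_lt hx1) (by nlinarith)
      have hc2 : (0:ℝ) ≤ (((n:ℝ)-1)-2)*((n:ℝ)-1) := mul_nonneg (by linarith) (by linarith)
      nlinarith [hex, h2, hm, hc2, hnR]
    -- step 2 : y^(n-1) * (x^n+1) < x^(n-1) * (y^n+1)
    have hgs := geom_sum₂_mul y x (n-1)  -- (Σ i in range (n-1), y^i * x^(n-1-1-i)) * (y - x) = y^(n-1) - x^(n-1)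
    have hbound : (∑ i ∈ Finset.range (n-1), y ^ i * x ^ (n-1-1-i)) ≤ ((n:ℝ)-1) * y ^ (n-2) := by
      have : ∀ i ∈ Finset.range (n-1), y ^ i * x ^ (n-1-1-i) ≤ y ^ (n-2) := by
        intro i hi
        simp only [Finset.mem_range] at hi
        have h1 : x ^ (n-1-1-i) ≤ y ^ (n-2-i) := by
          have : n-1-1-i = n-2-i := by omega
          rw [this]
          exact pow_le_pow_left₀ (le_of_lt hx0) (le_of_lt hxy) _
        calc y ^ i * x ^ (n-1-1-i) ≤ y ^ i * y ^ (n-2-i) := by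
              apply mul_le_mul_of_nonneg_left h1 (by positivity)
        _ = y ^ (n-2) := by rw [← pow_add]; congr 1; omega
      have h := Finset.sum_le_card_nsmul (Finset.range (n-1)) _ _ this
      rw [Finset.card_range] at h
      have hcast : ((n - 1 : ℕ) : ℝ) = (n:ℝ) - 1 := by push_cast [hn1]; ring
      simpa [nsmul_eq_mul, hcast] using h
    have hxy' : (0:ℝ) < y - x := by linarith
    have hprod : ((n:ℝ)-1) < x ^ (n-1) * y := by
      have h1 : x ^ n ≤ x ^ (n-1) * y := by
        have : x ^ n = x ^ (n-1) * x := by rw [← pow_succ]; congr 1; omega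
        rw [this]
        exact mul_le_mul_of_nonneg_left (le_of_lt hxy) (by positivity)
      linarith
    have hK : y ^ (n-1) * (x^n + 1) < x ^ (n-1) * (y^n + 1) := by
      have hyp : (0:ℝ) < y ^ (n-2) := by positivity
      have key : y ^ (n-1) - x ^ (n-1) < x ^ (n-1) * y ^ (n-1) * (y - x) := by
        have h1 : y ^ (n-1) - x ^ (n-1) ≤ ((n:ℝ)-1) * y ^ (n-2) * (y - x) := by
          have hm := mul_le_mul_of_nonneg_right hbound (le_of_lt hxy')
          linarith [hgs, hm]
        have hyy : y ^ (n-2) * y = y ^ (n-1) := by rw [← pow_succ]; congr 1; omega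
        have hlt : ((n:ℝ)-1) * y ^ (n-2) < x ^ (n-1) * y ^ (n-1) := by
          have hm := mul_lt_mul_of_pos_right hprod hyp
          calc ((n:ℝ)-1) * y ^ (n-2) < x ^ (n-1) * y * y ^ (n-2) := hm
          _ = x ^ (n-1) * y ^ (n-1) := by rw [mul_assoc, mul_comm y (y ^ (n-2)), hyy]
        have h2 := mul_lt_mul_of_pos_right hlt hxy'
        linarith
      have hxyn : x ^ (n-1) * y ^ n - y ^ (n-1) * x ^ n = x ^ (n-1) * y ^ (n-1) * (y - x) := by
        have hxx : x ^ n = x ^ (n-1) * x := by rw [← pow_succ]; congr 1; omega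
        have hyy : y ^ n = y ^ (n-1) * y := by rw [← pow_succ]; congr 1; omega
        rw [hxx, hyy]; ring
      linarith [key, hxyn]
    -- step 3 : x^(n-1) * Sy ≤ y^(n-1) * Sx
    have hS : x ^ (n-1) * Sy ≤ y ^ (n-1) * Sx := by
      rw [hSx, hSy, Finset.mul_sum, Finset.mul_sum]
      apply Finset.sum_le_sum
      intro j hj
      simp only [Finset.mem_Icc] at hj
      have hxj : x ^ j * x ^ (n-1-j) = x ^ (n-1) := by rw [← pow_add]; congr 1; omega
      have hyj : y ^ j * y ^ (n-1-j) = y ^ (n-1) := by rw [← pow_add]; congr 1; omega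
      calc x ^ (n-1) * y ^ j = (x ^ j * x ^ (n-1-j)) * y ^ j := by rw [hxj]
      _ ≤ (x ^ j * y ^ (n-1-j)) * y ^ j := by
          apply mul_le_mul_of_nonneg_right _ (by positivity)
          exact mul_le_mul_of_nonneg_left
            (pow_le_pow_left₀ (le_of_lt hx0) (le_of_lt hxy) _) (by positivity)
      _ = (y ^ j * y ^ (n-1-j)) * x ^ j := by ring
      _ = y ^ (n-1) * x ^ j := by rw [hyj]
    -- contradiction
    have e1 : x^(n-1) * (y^n + 1) = 2*((n:ℝ)-1) * (x^(n-1) * Sy) := by rw [hey]; ring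
    have e2 : y^(n-1) * (x^n + 1) = 2*((n:ℝ)-1) * (y^(n-1) * Sx) := by rw [hex]; ring
    have e3 : 2*((n:ℝ)-1) * (x^(n-1)*Sy) ≤ 2*((n:ℝ)-1)*(y^(n-1)*Sx) :=
      mul_le_mul_of_nonneg_left hS (by linarith)
    linarith [hK, e1, e2, e3]
  rcases lt_trichotomy x y with h | h | h
  · exact absurd (core x y hx1 hy1 h hx hy) (by simp)
  · exact h
  · exact absurd (core y x hy1 hx1 h hy hx) (by simp)


theorem stmt11 (n : ℕ) (hn : 3 ≤ n) :
    1 < specRad (SCmat n) ∧ (Qpoly n).eval (specRad (SCmat n)) = 0 ∧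
      ∀ x : ℝ, 1 < x → (Qpoly n).eval x = 0 → x = specRad (SCmat n) := by
  have hnR : (3:ℝ) ≤ (n:ℝ) := by exact_mod_cast hn
  obtain ⟨r, hra, hrb, hr0⟩ := Q_root_exists n hn
  have hr1 : (1:ℝ) < r := by linarith
  have hQ' : r ^ n + 1 = 2*((n:ℝ)-1) * (Tg r n - 1) := by
    have h := hr0
    rw [eval_Qpoly n r (by omega)] at h
    linarith
  have hspec := mem_spec hn hra hQ'
  have hub : ∀ x ∈ {x : ℝ | ∃ z ∈ spectrum ℂ ((SCmat n).map (algebraMap ℝ ℂ)),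
      ‖z‖ = x}, x ≤ r := by
    rintro x ⟨z, hz, rfl⟩
    exact spec_bound hn hra hQ' hz
  have hmem : r ∈ {x : ℝ | ∃ z ∈ spectrum ℂ ((SCmat n).map (algebraMap ℝ ℂ)),
      ‖z‖ = x} := by
    refine ⟨(r:ℂ), hspec, ?_⟩
    rw [Complex.norm_real, Real.norm_eq_abs, abs_of_pos (by linarith)]
  have hE : specRad (SCmat n) = r := by
    unfold specRad
    apply le_antisymm
    · exact csSup_le ⟨r, hmem⟩ hub
    · exact le_csSup ⟨r, hub⟩ hmem
  refine ⟨by rw [hE]; linarith, by rw [hE]; exact hr0, ?_⟩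
  intro x hx hxQ
  rw [hE]
  exact Q_root_unique n hn hx hr1 hxQ hr0
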